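/- Let v be a heavy vertex of a tree T that is the common center of exactly two vines, and let e be an edge incident to v that is not incident to any end of those vines. Then e is not used in some minimum path covering of T, and P(T) = P(T − e). -/

import Mathlib

namespace PaperPC

open SimpleGraph

variable {V : Type*}

/-- The degree of a vertex, via the cardinality of its neighbor set. -/
noncomputable def ndeg (G : SimpleGraph V) (v : V) : ℕ := (G.neighborSet v).ncard

/-- A linear forest: an acyclic graph of maximum degree at most 2,
i.e. a vertex-disjoint union of paths.  A spanning linear subforest of `G`
is exactly a path covering of `G` (isolated vertices are one-vertex paths). -/
def IsLinearForest (H : SimpleGraph V) : Prop :=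
  H.IsAcyclic ∧ ∀ v, ndeg H v ≤ 2

/-- The number of paths of a path covering = number of connected components. -/
noncomputable def numPaths (H : SimpleGraph V) : ℕ := Nat.card H.ConnectedComponent

/-- The path covering number `P(G)`. -/
noncomputable def pathCoverNumber (G : SimpleGraph V) : ℕ :=
  sInf {k | ∃ H ≤ G, IsLinearForest H ∧ numPaths H = k}

/-- `H` is a minimum path covering of `G`. -/
def IsMinPathCover (G H : SimpleGraph V) : Prop :=
  H ≤ G ∧ IsLinearForest H ∧ numPaths H = pathCoverNumber G

open scoped Classical in
/-- The path sequence of a path covering: the multiset of the numbers of vertices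
of its paths (a multiset encodes the nondecreasing ordered sequence). -/
noncomputable def pathSeq [Fintype V] (H : SimpleGraph V) : Multiset ℕ :=
  (Finset.univ : Finset H.ConnectedComponent).val.map fun c => c.supp.ncard

/-- `G` admits a unique path sequence. -/
def UniquePathSequence [Fintype V] (G : SimpleGraph V) : Prop :=
  ∀ H₁ H₂ : SimpleGraph V, IsMinPathCover G H₁ → IsMinPathCover G H₂ →
    pathSeq H₁ = pathSeq H₂

/-- Number of leaves (vertices of degree 1). -/
noncomputable def numLeaves (G : SimpleGraph V) : ℕ := {v | ndeg G v = 1}.ncard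

/-- Number of heavy edges (edges both of whose endpoints have degree > 2). -/
noncomputable def numHeavyEdges (G : SimpleGraph V) : ℕ :=
  {e ∈ G.edgeSet | ∀ v ∈ e, 2 < ndeg G v}.ncard

/-- Number of edges. -/
noncomputable def numEdges (G : SimpleGraph V) : ℕ := G.edgeSet.ncard

/-- A graph is 2-sparse if no two adjacent vertices both have degree > 2. -/
def TwoSparse (G : SimpleGraph V) : Prop :=
  ∀ u v, G.Adj u v → ndeg G u ≤ 2 ∨ ndeg G v ≤ 2

/-- `G` is a path graph. -/
def IsPathGraph (G : SimpleGraph V) : Prop := G.IsTree ∧ ∀ v, ndeg G v ≤ 2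

/-- `G` is a cycle graph. -/
def IsCycleGraph (G : SimpleGraph V) : Prop := G.Connected ∧ ∀ v, ndeg G v = 2

/-- A generalized star: a tree with exactly one heavy vertex (the center) in which
all vines have the same number of vertices (equivalently, all leaves are at the same
distance from the center). -/
def IsGenStar (G : SimpleGraph V) : Prop :=
  G.IsTree ∧ ∃ c k, 2 < ndeg G c ∧ (∀ v, v ≠ c → ndeg G v ≤ 2) ∧
    ∀ v, ndeg G v = 1 → G.dist c v = k

/-- An L(2,1)-labeling. -/
def IsL21Labeling (G : SimpleGraph V) (f : V → ℕ) : Prop :=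
  (∀ u v, G.Adj u v → 2 ≤ Nat.dist (f u) (f v)) ∧
  (∀ u v, G.dist u v = 2 → 1 ≤ Nat.dist (f u) (f v))

/-- `λ(G)`: the least `k` such that `G` has an L(2,1)-labeling with labels in `{0,…,k}`. -/
noncomputable def lambdaNum (G : SimpleGraph V) : ℕ :=
  sInf {k | ∃ f : V → ℕ, IsL21Labeling G f ∧ ∀ v, f v ≤ k}

/-- A λ-labeling: an L(2,1)-labeling with maximum label `λ(G)`. -/
def IsLambdaLabeling (G : SimpleGraph V) (f : V → ℕ) : Prop :=
  IsL21Labeling G f ∧ (∀ v, f v ≤ lambdaNum G) ∧ ∃ v, f v = lambdaNum G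

/-- The set of holes of a labeling: unused labels `h` with `1 ≤ h ≤ λ(G) - 1`. -/
def labHoles (G : SimpleGraph V) (f : V → ℕ) : Set ℕ :=
  {h | 1 ≤ h ∧ h + 1 ≤ lambdaNum G ∧ ∀ v, f v ≠ h}

/-- The hole index `ρ(G)`: minimum number of holes over all λ-labelings. -/
noncomputable def holeIndex (G : SimpleGraph V) : ℕ :=
  sInf {k | ∃ f : V → ℕ, IsLambdaLabeling G f ∧ (labHoles G f).ncard = k}

open scoped Classical in
/-- The island sequence of a labeling: the multiset of cardinalities of the maximal
intervals `[a,b]` of consecutive integers all used by the labeling. -/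
noncomputable def islandSeq [Fintype V] (G : SimpleGraph V) (f : V → ℕ) : Multiset ℕ :=
  (((Finset.range (lambdaNum G + 1)) ×ˢ (Finset.range (lambdaNum G + 1))).filter
    (fun q => q.1 ≤ q.2 ∧ (∀ x ∈ Finset.Icc q.1 q.2, ∃ v, f v = x) ∧
      (q.1 = 0 ∨ ∀ v, f v ≠ q.1 - 1) ∧ ∀ v, f v ≠ q.2 + 1)).val.map
    fun q => q.2 - q.1 + 1

/-- `G` admits (at least) two distinct island sequences. -/
def MultipleIslandSequences [Fintype V] (G : SimpleGraph V) : Prop :=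
  ∃ f g : V → ℕ, IsLambdaLabeling G f ∧ IsLambdaLabeling G g ∧
    (labHoles G f).ncard = holeIndex G ∧ (labHoles G g).ncard = holeIndex G ∧
    islandSeq G f ≠ islandSeq G g

/-- A vine: a maximal path one of whose endpoints (`a`) is a leaf and all of whose
vertices are light.  Maximality: any light vertex adjacent to the other end already
lies on the path. -/
def IsVine (G : SimpleGraph V) {a b : V} (p : G.Walk a b) : Prop :=
  p.IsPath ∧ ndeg G a = 1 ∧ (∀ v ∈ p.support, ndeg G v ≤ 2) ∧
  ∀ c, G.Adj b c → ndeg G c ≤ 2 → c ∈ p.support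

/-- A vine with center `v`: the (heavy) vertex adjacent to the non-leaf end of the vine. -/
def IsVineWithCenter (G : SimpleGraph V) {a b : V} (p : G.Walk a b) (v : V) : Prop :=
  IsVine G p ∧ G.Adj b v ∧ 2 < ndeg G v

/-- The matching number of the subgraph of `G` induced by `S`. -/
noncomputable def matchingNumberOn (G : SimpleGraph V) (S : Set V) : ℕ :=
  sSup {k | ∃ M : Set (Sym2 V), M ⊆ G.edgeSet ∧ (∀ e ∈ M, ∀ v ∈ e, v ∈ S) ∧
    (∀ e ∈ M, ∀ f ∈ M, e ≠ f → ∀ v, v ∈ e → v ∉ f) ∧ M.ncard = k}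

/-- Labels used in the family `F`: `A`, or `B k` where `k` records the number of
vertices of each vine of the labeled generalized star that produced the label. -/
inductive Lab | A | B (k : ℕ)

/-- A labeled generalized star with center `c` whose vines have `k` vertices each
(equivalently, every leaf is at distance `k` from `c`); the degenerate case
`deg c = 2` is the convention regarding a path of length `2k` as a labeled
generalized star with two vines.  The neighbors of the center are labeled `B k`,
the other non-leaf vertices (and the center) are labeled `A`, leaves are unlabeled. -/
def IsLGenStar {W : Type*} (H : SimpleGraph W) (c : W) (k : ℕ)
    (lab : W → Option Lab) : Prop :=
  H.IsTree ∧ 2 ≤ ndeg H c ∧ (∀ v, v ≠ c → ndeg H v ≤ 2) ∧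
  (∀ v, ndeg H v = 1 → H.dist c v = k) ∧
  lab c = some Lab.A ∧
  (∀ v, H.Adj c v → lab v = some (Lab.B k)) ∧
  (∀ v, v ≠ c → ¬H.Adj c v → ndeg H v = 1 → lab v = none) ∧
  (∀ v, v ≠ c → ¬H.Adj c v → 2 ≤ ndeg H v → lab v = some Lab.A)

/-- A labeled path: a path with at least three vertices, non-leaf vertices labeled `A`. -/
def IsLPath {W : Type*} (H : SimpleGraph W) (lab : W → Option Lab) : Prop :=
  H.IsTree ∧ (∀ v, ndeg H v ≤ 2) ∧ 3 ≤ Nat.card W ∧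
  (∀ v, ndeg H v = 1 → lab v = none) ∧
  ∀ v, 2 ≤ ndeg H v → lab v = some Lab.A

/-- The induced subgraph of `T` on `s` is a labeled generalized star. -/
def LGenStarOn (T : SimpleGraph V) (s : Set V) (c : V) (k : ℕ)
    (lab : V → Option Lab) : Prop :=
  ∃ hc : c ∈ s, IsLGenStar (T.induce s) ⟨c, hc⟩ k fun v => lab v.1

/-- The induced subgraph of `T` on `s` is a labeled path. -/
def LPathOn (T : SimpleGraph V) (s : Set V) (lab : V → Option Lab) : Prop :=
  IsLPath (T.induce s) fun v => lab v.1

/-- The family `F` of labeled trees, realized as induced subgraphs (on vertex sets `s`)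
of an ambient graph `T`:  start from a labeled generalized star with at least three
vines or from a labeled path, and repeatedly attach, via a single new edge, a labeled
generalized star with at least three vines at a vertex labeled `A` (Type-1), a labeled
path by one of its non-leaf vertices at a vertex labeled `A` (Type-2), or a labeled
generalized star whose vines have the same number of vertices `k` as those of the star
that labeled `u` with `B k`, at a vertex `u` labeled `B k` (Type-3). -/
inductive InF (T : SimpleGraph V) : Set V → (V → Option Lab) → Prop
  | base_star (s : Set V) (c : V) (k : ℕ) (lab : V → Option Lab) :
      LGenStarOn T s c k lab → 3 ≤ {w ∈ s | T.Adj c w}.ncard → InF T s lab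
  | base_path (s : Set V) (lab : V → Option Lab) :
      LPathOn T s lab → InF T s lab
  | type1 (s : Set V) (lab : V → Option Lab) (t : Set V) (lab' : V → Option Lab)
      (u c : V) (k : ℕ) :
      InF T s lab → Disjoint s t → u ∈ s → c ∈ t → lab u = some Lab.A →
      LGenStarOn T t c k lab' → 3 ≤ {w ∈ t | T.Adj c w}.ncard →
      (∀ x ∈ s, ∀ y ∈ t, (T.Adj x y ↔ x = u ∧ y = c)) →
      (∀ x ∈ s, lab' x = lab x) →
      InF T (s ∪ t) lab'
  | type2 (s : Set V) (lab : V → Option Lab) (t : Set V) (lab' : V → Option Lab)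
      (u v : V) :
      InF T s lab → Disjoint s t → u ∈ s → v ∈ t → lab u = some Lab.A →
      LPathOn T t lab' → 2 ≤ {w ∈ t | T.Adj v w}.ncard →
      (∀ x ∈ s, ∀ y ∈ t, (T.Adj x y ↔ x = u ∧ y = v)) →
      (∀ x ∈ s, lab' x = lab x) →
      InF T (s ∪ t) lab'
  | type3 (s : Set V) (lab : V → Option Lab) (t : Set V) (lab' : V → Option Lab)
      (u c : V) (k : ℕ) :
      InF T s lab → Disjoint s t → u ∈ s → c ∈ t → lab u = some (Lab.B k) →
      LGenStarOn T t c k lab' →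
      (∀ x ∈ s, ∀ y ∈ t, (T.Adj x y ↔ x = u ∧ y = c)) →
      (∀ x ∈ s, lab' x = lab x) →
      InF T (s ∪ t) lab'

/-- `G` is obtained from the tree `T` by expanding each edge of `T` into a complete
graph of arbitrary order: there is an embedding `ι` of the vertices of `T` and an
assignment `b` of a block of vertices of `G` to each edge of `T` such that an original
vertex lies in the block of an edge iff it is an endpoint of that edge, blocks of
distinct edges meet only in original vertices, every vertex of `G` lies in some block,
and two distinct vertices of `G` are adjacent iff they lie in a common block. -/
def IsBlockExpansion {U W : Type*} (T : SimpleGraph U) (G : SimpleGraph W) : Prop :=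
  ∃ (ι : U ↪ W) (b : Sym2 U → Set W),
    (∀ (u : U), ∀ e ∈ T.edgeSet, (ι u ∈ b e ↔ u ∈ e)) ∧
    (∀ e ∈ T.edgeSet, ∀ f ∈ T.edgeSet, e ≠ f → b e ∩ b f ⊆ Set.range ι) ∧
    (∀ w : W, ∃ e ∈ T.edgeSet, w ∈ b e) ∧
    (∀ x y : W, G.Adj x y ↔ x ≠ y ∧ ∃ e ∈ T.edgeSet, x ∈ b e ∧ y ∈ b e)

section AuxLemmas

private lemma ndeg_le_of_le [Fintype V] {H T : SimpleGraph V} (h : H ≤ T) (v : V) :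
    ndeg H v ≤ ndeg T v :=
  Set.ncard_le_ncard (fun _ hx => h hx) (Set.toFinite _)

private lemma three_le_ncard [Fintype V] {S : Set V} {x y z : V} (hx : x ∈ S) (hy : y ∈ S)
    (hz : z ∈ S) (hxy : x ≠ y) (hxz : x ≠ z) (hyz : y ≠ z) : 3 ≤ S.ncard := by
  have hsub : ({x, y, z} : Set V) ⊆ S := by
    intro t ht
    simp only [Set.mem_insert_iff, Set.mem_singleton_iff] at ht
    rcases ht with rfl | rfl | rfl <;> assumption
  have h3 : ({x, y, z} : Set V).ncard = 3 := by
    rw [Set.ncard_insert_of_notMem (by simp [hxy, hxz]) (Set.toFinite _),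
        Set.ncard_insert_of_notMem (by simp [hyz]) (Set.toFinite _), Set.ncard_singleton]
  calc 3 = ({x, y, z} : Set V).ncard := h3.symm
    _ ≤ S.ncard := Set.ncard_le_ncard hsub (Set.toFinite _)

private lemma not_reachable_of_edge_not_mem {T H : SimpleGraph V} (hT : T.IsAcyclic)
    (hHT : H ≤ T) {x y : V} (hxy : T.Adj x y) (hne : s(x, y) ∉ H.edgeSet) :
    ¬ H.Reachable x y := by
  classical
  intro hr
  obtain ⟨w⟩ := hr
  let p := w.toPath
  have hsub : ∀ e ∈ (p : H.Walk x y).edges, e ∈ T.edgeSet :=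
    fun e he => edgeSet_mono hHT ((p : H.Walk x y).edges_subset_edgeSet he)
  have hq : ((p : H.Walk x y).transfer T hsub).IsPath := p.isPath.transfer hsub
  have huniq := hT.path_unique ⟨(p : H.Walk x y).transfer T hsub, hq⟩ (Path.singleton hxy)
  have hxe : s(x, y) ∈ ((p : H.Walk x y).transfer T hsub).edges := by
    have heq : ((p : H.Walk x y).transfer T hsub) = Walk.cons hxy Walk.nil :=
      congrArg Subtype.val huniq
    rw [heq]; simp
  rw [Walk.edges_transfer] at hxe
  exact hne ((p : H.Walk x y).edges_subset_edgeSet hxe)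

private lemma isAcyclic_mono {G H : SimpleGraph V} (h : H ≤ G) (hG : G.IsAcyclic) :
    H.IsAcyclic := fun _ c hc =>
  hG (c.transfer G fun e he => edgeSet_mono h (c.edges_subset_edgeSet he)) (hc.transfer _)

private lemma deleteEdges_sup_edge_eq {H : SimpleGraph V} {x y : V} (h : H.Adj x y) :
    H.deleteEdges {s(x, y)} ⊔ edge x y = H := by
  ext a b
  simp only [sup_adj, deleteEdges_adj, Set.mem_singleton_iff, edge_adj]
  constructor
  · rintro (⟨h1, -⟩ | ⟨⟨rfl, rfl⟩ | ⟨rfl, rfl⟩, -⟩)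
    · exact h1
    · exact h
    · exact h.symm
  · intro hab
    by_cases hee : s(a, b) = s(x, y)
    · refine Or.inr ⟨?_, hab.ne⟩
      rcases Sym2.eq_iff.mp hee with ⟨rfl, rfl⟩ | ⟨rfl, rfl⟩
      · exact Or.inl ⟨rfl, rfl⟩
      · exact Or.inr ⟨rfl, rfl⟩
    · exact Or.inl ⟨hab, hee⟩

private lemma acyclic_sup_edge {H : SimpleGraph V} {x y : V} (ha : H.IsAcyclic)
    (hr : ¬ H.Reachable x y) : (H ⊔ edge x y).IsAcyclic := by
  have hxy : x ≠ y := by rintro rfl; exact hr (Reachable.refl x)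
  have hadj : ¬ H.Adj x y := fun h => hr h.reachable
  have hKadj : (H ⊔ edge x y).Adj x y := Or.inr (by rw [edge_adj]; exact ⟨Or.inl ⟨rfl, rfl⟩, hxy⟩)
  have hdel : (H ⊔ edge x y) \ fromEdgeSet {s(x, y)} = H := by
    ext a b
    simp only [sdiff_adj, sup_adj, edge_adj, fromEdgeSet_adj, Set.mem_singleton_iff]
    constructor
    · rintro ⟨hH | ⟨⟨rfl, rfl⟩ | ⟨rfl, rfl⟩, hne2⟩, hnot⟩
      · exact hH
      · exact absurd ⟨rfl, hne2⟩ hnot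
      · exact absurd ⟨Sym2.eq_swap, hne2⟩ hnot
    · intro hH
      refine ⟨Or.inl hH, ?_⟩
      rintro ⟨hee, -⟩
      rcases Sym2.eq_iff.mp hee with ⟨rfl, rfl⟩ | ⟨rfl, rfl⟩
      · exact hadj hH
      · exact hadj hH.symm
  have hbridge : (H ⊔ edge x y).IsBridge s(x, y) := by
    rw [isBridge_iff, show (H ⊔ edge x y).deleteEdges {s(x, y)} = H from hdel]
    exact hr
  intro v c hc
  by_cases hmem : s(x, y) ∈ c.edges
  · exact ((isBridge_iff_forall_cycle_notMem hKadj).mp hbridge) c hc hmem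
  · refine ha (c.transfer H ?_) (hc.transfer _)
    intro e he
    have hmem2 : e ∈ (H ⊔ edge x y).edgeSet := c.edges_subset_edgeSet he
    rw [edgeSet_sup, edge_edgeSet_of_ne hxy] at hmem2
    rcases hmem2 with h1 | h1
    · exact h1
    · exact absurd (Set.mem_singleton_iff.mp h1 ▸ he) hmem

private lemma reachable_sup_edge {H : SimpleGraph V} {x y u w : V}
    (h : (H ⊔ edge x y).Reachable u w) :
    H.Reachable u w ∨ (H.Reachable u x ∧ H.Reachable y w) ∨
      (H.Reachable u y ∧ H.Reachable x w) := by
  obtain ⟨p⟩ := h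
  induction p with
  | nil => exact Or.inl (Reachable.refl _)
  | @cons a b c hadj q ih =>
    rcases hadj with hH | hE
    · have hab : H.Reachable a b := hH.reachable
      rcases ih with h1 | ⟨h2, h3⟩ | ⟨h2, h3⟩
      · exact Or.inl (hab.trans h1)
      · exact Or.inr (Or.inl ⟨hab.trans h2, h3⟩)
      · exact Or.inr (Or.inr ⟨hab.trans h2, h3⟩)
    · rw [edge_adj] at hE
      rcases hE.1 with ⟨rfl, rfl⟩ | ⟨rfl, rfl⟩
      · rcases ih with h1 | ⟨h2, h3⟩ | ⟨h2, h3⟩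
        · exact Or.inr (Or.inl ⟨Reachable.refl _, h1⟩)
        · exact Or.inl (h2.symm.trans h3)
        · exact Or.inl h3
      · rcases ih with h1 | ⟨h2, h3⟩ | ⟨h2, h3⟩
        · exact Or.inr (Or.inr ⟨Reachable.refl _, h1⟩)
        · exact Or.inl h3
        · exact Or.inl (h2.symm.trans h3)

private lemma numPaths_sup_edge [Fintype V] {H : SimpleGraph V} {x y : V}
    (hr : ¬ H.Reachable x y) : numPaths (H ⊔ edge x y) + 1 = numPaths H := by
  classical
  have hxy : x ≠ y := by rintro rfl; exact hr (Reachable.refl x)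
  have hKadj : (H ⊔ edge x y).Adj x y :=
    Or.inr (by rw [edge_adj]; exact ⟨Or.inl ⟨rfl, rfl⟩, hxy⟩)
  let f : {C : H.ConnectedComponent // C ≠ H.connectedComponentMk y} →
      (H ⊔ edge x y).ConnectedComponent :=
    fun C => C.1.map (Hom.ofLE (le_sup_left : H ≤ H ⊔ edge x y))
  have hf : Function.Bijective f := by
    constructor
    · rintro ⟨C1, h1⟩ ⟨C2, h2⟩ hff
      obtain ⟨u1, rfl⟩ := Quot.exists_rep C1
      obtain ⟨u2, rfl⟩ := Quot.exists_rep C2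
      have hreach : (H ⊔ edge x y).Reachable u1 u2 := by
        apply ConnectedComponent.exact
        have hff' : (H.connectedComponentMk u1).map (Hom.ofLE (le_sup_left : H ≤ H ⊔ edge x y))
            = (H.connectedComponentMk u2).map (Hom.ofLE (le_sup_left : H ≤ H ⊔ edge x y)) := hff
        rwa [ConnectedComponent.map_mk, ConnectedComponent.map_mk] at hff'
      rcases reachable_sup_edge hreach with h3 | ⟨h3, h4⟩ | ⟨h3, h4⟩
      · exact Subtype.ext (ConnectedComponent.sound h3)
      · exact absurd (ConnectedComponent.sound h4.symm) h2
      · exact absurd (ConnectedComponent.sound h3) h1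
    · intro D
      obtain ⟨w, rfl⟩ := Quot.exists_rep D
      by_cases hw : H.Reachable w y
      · refine ⟨⟨H.connectedComponentMk x, fun hcon => hr (ConnectedComponent.exact hcon)⟩, ?_⟩
        show ((H.connectedComponentMk x).map _) = _
        rw [ConnectedComponent.map_mk]
        exact ConnectedComponent.sound (hKadj.reachable.trans (hw.symm.mono le_sup_left))
      · refine ⟨⟨H.connectedComponentMk w, fun hcon => hw (ConnectedComponent.exact hcon)⟩, ?_⟩
        show ((H.connectedComponentMk w).map _) = _
        rw [ConnectedComponent.map_mk]
        rfl
  have hcard1 : numPaths (H ⊔ edge x y)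
      = Nat.card {C : H.ConnectedComponent // C ≠ H.connectedComponentMk y} :=
    (Nat.card_congr (Equiv.ofBijective f hf)).symm
  have hcard2 : Nat.card H.ConnectedComponent
      = Nat.card {C : H.ConnectedComponent // C = H.connectedComponentMk y}
        + Nat.card {C : H.ConnectedComponent // ¬ C = H.connectedComponentMk y} := by
    rw [← Nat.card_sum]
    exact Nat.card_congr (Equiv.sumCompl (· = H.connectedComponentMk y)).symm
  have hone : Nat.card {C : H.ConnectedComponent // C = H.connectedComponentMk y} = 1 :=
    Nat.card_unique
  rw [hcard1]
  show Nat.card {C : H.ConnectedComponent // ¬ C = H.connectedComponentMk y} + 1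
      = Nat.card H.ConnectedComponent
  omega

private lemma edge_le_of_adj {T : SimpleGraph V} {x y : V} (h : T.Adj x y) : edge x y ≤ T := by
  intro a b hab
  rw [edge_adj] at hab
  rcases hab.1 with ⟨rfl, rfl⟩ | ⟨rfl, rfl⟩
  · exact h
  · exact h.symm

/-- The key swap: replace the edge `s(v,u)` of `H` by the edge `s(b,v)`. -/
private lemma swap_edge [Fintype V] {T H : SimpleGraph V} (hT : T.IsTree) (hHT : H ≤ T)
    (hLF : IsLinearForest H) {v u b : V} (hvu : T.Adj v u) (hbv : T.Adj b v)
    (hbu : b ≠ u) (hbL : ndeg T b ≤ 2) (hvH : H.Adj v u) (hbH : ¬ H.Adj v b) :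
    ∃ H', H' ≤ T ∧ IsLinearForest H' ∧ numPaths H' = numPaths H ∧ s(v, u) ∉ H'.edgeSet := by
  classical
  set H₂ := H.deleteEdges {s(v, u)} with hH₂def
  have hH₂H : H₂ ≤ H := deleteEdges_le _
  have hH₂T : H₂ ≤ T := hH₂H.trans hHT
  have hH₂acyc : H₂.IsAcyclic := isAcyclic_mono hH₂H hLF.1
  have hvu_not : s(v, u) ∉ H₂.edgeSet := by
    rw [mem_edgeSet, hH₂def, deleteEdges_adj]
    simp
  have hbv_not : s(b, v) ∉ H₂.edgeSet := by
    rw [mem_edgeSet]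
    intro hcon
    exact hbH ((hH₂H hcon).symm)
  have hnr_vu : ¬ H₂.Reachable v u := not_reachable_of_edge_not_mem hT.2 hH₂T hvu hvu_not
  have hnr_bv : ¬ H₂.Reachable b v := not_reachable_of_edge_not_mem hT.2 hH₂T hbv hbv_not
  have hrestore : H₂ ⊔ edge v u = H := deleteEdges_sup_edge_eq hvH
  have hcount : numPaths (H₂ ⊔ edge b v) = numPaths H := by
    have e1 := numPaths_sup_edge hnr_bv
    have e2 := numPaths_sup_edge hnr_vu
    rw [hrestore] at e2
    omega
  refine ⟨H₂ ⊔ edge b v, sup_le hH₂T (edge_le_of_adj hbv), ⟨acyclic_sup_edge hH₂acyc hnr_bv, ?_⟩,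
    hcount, ?_⟩
  · -- degrees
    intro w
    by_cases hwL : ndeg T w ≤ 2
    · exact le_trans (ndeg_le_of_le (sup_le hH₂T (edge_le_of_adj hbv)) w) hwL
    have hwb : w ≠ b := fun hcon => hwL (by rw [hcon]; exact hbL)
    by_cases hwv : w = v
    · have hvb : v ≠ b := fun hcon => hwL (by rw [hwv, hcon]; exact hbL)
      rw [hwv]
      have hsub : (H₂ ⊔ edge b v).neighborSet v ⊆ insert b (H.neighborSet v \ {u}) := by
        intro z hz
        rcases hz with hz | hz
        · rw [deleteEdges_adj] at hz
          right
          refine ⟨hz.1, fun hcon => hz.2 ?_⟩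
          rw [Set.mem_singleton_iff] at hcon
          rw [hcon]
          exact Set.mem_singleton _
        · rw [edge_adj] at hz
          rcases hz.1 with ⟨h5, h6⟩ | ⟨h5, h6⟩
          · exact absurd h5 hvb
          · exact Or.inl h6
      have hu_mem : u ∈ H.neighborSet v := hvH
      have hd1 : (H.neighborSet v \ {u}).ncard = (H.neighborSet v).ncard - 1 :=
        Set.ncard_diff_singleton_of_mem hu_mem
      have hd2 : ndeg H v ≤ 2 := hLF.2 v
      have hd3 : ((H₂ ⊔ edge b v).neighborSet v).ncard
          ≤ (insert b (H.neighborSet v \ {u})).ncard :=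
        Set.ncard_le_ncard hsub (Set.toFinite _)
      have hd4 := Set.ncard_insert_le b (H.neighborSet v \ {u})
      unfold ndeg at hd2 ⊢
      omega
    · have hsub : (H₂ ⊔ edge b v).neighborSet w ⊆ H.neighborSet w := by
        intro z hz
        rcases hz with hz | hz
        · rw [deleteEdges_adj] at hz
          exact hz.1
        · rw [edge_adj] at hz
          rcases hz.1 with ⟨h5, h6⟩ | ⟨h5, h6⟩
          · exact absurd h5 hwb
          · exact absurd h5 hwv
      exact le_trans (Set.ncard_le_ncard hsub (Set.toFinite _)) (hLF.2 w)
  · -- s(v,u) not in edges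
    rw [mem_edgeSet]
    rintro (hcon | hcon)
    · rw [deleteEdges_adj] at hcon
      exact hcon.2 rfl
    · rw [edge_adj] at hcon
      rcases hcon.1 with ⟨h5, h6⟩ | ⟨h5, h6⟩
      · exact hcon.2 h6.symm
      · exact hbu h6.symm

/-- Uniqueness of the light path down to a leaf. -/
private lemma walk_to_leaf_unique [Fintype V] {T : SimpleGraph V} {b a : V} (r : T.Walk b a) :
    ∀ {a' : V} (s : T.Walk b a'), r.IsPath → s.IsPath → ndeg T a = 1 → ndeg T a' = 1 →
    (∀ x ∈ r.support, ndeg T x ≤ 2) → (∀ x ∈ s.support, ndeg T x ≤ 2) →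
    ∀ w, T.Adj b w → w ∉ r.support → w ∉ s.support → a = a' := by
  induction r with
  | nil =>
    rename_i c
    intro a' s _ hs hda hda' _ _ w hbw hwr hws
    cases s with
    | nil => rfl
    | @cons _ y _ hadj s' =>
      exfalso
      have hy : y ∈ (Walk.cons hadj s').support := by
        rw [Walk.support_cons]
        exact List.mem_cons_of_mem _ s'.start_mem_support
      have hwy : w ≠ y := fun hcon => hws (hcon ▸ hy)
      have h2 : 1 < (T.neighborSet c).ncard := by
        rw [Set.one_lt_ncard (Set.toFinite _)]
        exact ⟨w, hbw, y, hadj, hwy⟩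
      unfold ndeg at hda
      omega
  | @cons b x a hadj r' ih =>
    intro a' s hr hs hda hda' hlr hls w hbw hwr hws
    have hxr : x ∈ (Walk.cons hadj r').support := by
      rw [Walk.support_cons]
      exact List.mem_cons_of_mem _ r'.start_mem_support
    have hwx : w ≠ x := fun hcon => hwr (hcon ▸ hxr)
    cases s with
    | nil =>
      exfalso
      have : 1 < (T.neighborSet b).ncard := by
        rw [Set.one_lt_ncard (Set.toFinite _)]
        exact ⟨w, hbw, x, hadj, hwx⟩
      unfold ndeg at hda'
      omega
    | @cons _ y _ hadj' s' =>
      have hys : y ∈ (Walk.cons hadj' s').support := by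
        rw [Walk.support_cons]
        exact List.mem_cons_of_mem _ s'.start_mem_support
      have hwy : w ≠ y := fun hcon => hws (hcon ▸ hys)
      have hxy : x = y := by
        by_contra hxy
        have h3 : 3 ≤ (T.neighborSet b).ncard :=
          three_le_ncard (S := T.neighborSet b) hadj hadj' hbw hxy
            (fun hcon => hwx hcon.symm) (fun hcon => hwy hcon.symm)
        have hb2 : ndeg T b ≤ 2 := hlr b (Walk.start_mem_support _)
        unfold ndeg at hb2
        omega
      subst hxy
      have hr' : r'.IsPath := (Walk.cons_isPath_iff _ _).mp hr |>.1
      have hbr' : b ∉ r'.support := (Walk.cons_isPath_iff _ _).mp hr |>.2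
      have hs' : s'.IsPath := (Walk.cons_isPath_iff _ _).mp hs |>.1
      have hbs' : b ∉ s'.support := (Walk.cons_isPath_iff _ _).mp hs |>.2
      exact ih s' hr' hs' hda hda'
        (fun z hz => hlr z (by rw [Walk.support_cons]; exact List.mem_cons_of_mem _ hz))
        (fun z hz => hls z (by rw [Walk.support_cons]; exact List.mem_cons_of_mem _ hz))
        b hadj.symm hbr' hbs'

end AuxLemmas

/-- **Lemma (Statement 12).** Let `v` be a heavy vertex of a tree `T` which is the
common center of exactly two vines, and let `e` be an edge incident to `v` that is not
incident to any end of vines.  Then `e` is unused in some minimum path covering of `T`,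
and `P(T) = P(T − e)`. -/
theorem center_two_vines_delete_edge {V : Type*} [Fintype V] (T : SimpleGraph V)
    (hT : T.IsTree) {v a₁ b₁ a₂ b₂ : V}
    (p₁ : T.Walk a₁ b₁) (p₂ : T.Walk a₂ b₂)
    (h₁ : IsVineWithCenter T p₁ v) (h₂ : IsVineWithCenter T p₂ v) (hne : a₁ ≠ a₂)
    (honly : ∀ (a b : V) (p : T.Walk a b), IsVineWithCenter T p v → a = a₁ ∨ a = a₂)
    (e : Sym2 V) (he : e ∈ T.edgeSet) (hv : v ∈ e)
    (hend : ∀ w ∈ e, ∀ (a b : V) (p : T.Walk a b), IsVine T p → w ≠ a ∧ w ≠ b) :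
    (∃ H, IsMinPathCover T H ∧ e ∉ H.edgeSet) ∧
      pathCoverNumber T = pathCoverNumber (T.deleteEdges {e}) := by
  classical
  obtain ⟨u, rfl⟩ : ∃ u, e = s(v, u) := ⟨Sym2.Mem.other hv, (Sym2.other_spec hv).symm⟩
  have hvuT : T.Adj v u := (mem_edgeSet _).mp he
  have hu_mem : u ∈ s(v, u) := Sym2.mem_mk_right v u
  have hub₁ : u ≠ b₁ := (hend u hu_mem a₁ b₁ p₁ h₁.1).2
  have hub₂ : u ≠ b₂ := (hend u hu_mem a₂ b₂ p₂ h₂.1).2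
  have hb₁b₂ : b₁ ≠ b₂ := by
    intro hbb
    apply hne
    subst hbb
    have hvnot₁ : v ∉ p₁.reverse.support := by
      rw [Walk.support_reverse]
      intro hcon
      have hc1 := h₁.1.2.2.1 v (List.mem_reverse.mp hcon)
      have hc2 := h₁.2.2
      omega
    have hvnot₂ : v ∉ p₂.reverse.support := by
      rw [Walk.support_reverse]
      intro hcon
      have hc1 := h₂.1.2.2.1 v (List.mem_reverse.mp hcon)
      have hc2 := h₁.2.2
      omega
    exact walk_to_leaf_unique p₁.reverse p₂.reverse h₁.1.1.reverse h₂.1.1.reverse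
      h₁.1.2.1 h₂.1.2.1
      (fun x hx => h₁.1.2.2.1 x (List.mem_reverse.mp (by rwa [Walk.support_reverse] at hx)))
      (fun x hx => h₂.1.2.2.1 x (List.mem_reverse.mp (by rwa [Walk.support_reverse] at hx)))
      v h₁.2.1 hvnot₁ hvnot₂
  have hSne : ∀ G : SimpleGraph V,
      {k | ∃ H ≤ G, IsLinearForest H ∧ numPaths H = k}.Nonempty := by
    intro G
    refine ⟨numPaths (⊥ : SimpleGraph V), ⊥, bot_le, ⟨isAcyclic_bot, fun w => ?_⟩, rfl⟩
    have hns : (⊥ : SimpleGraph V).neighborSet w = ∅ := by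
      ext z
      simp [neighborSet]
    simp [ndeg, hns]
  obtain ⟨H, hHT, hHLF, hHP⟩ :
      ∃ H ≤ T, IsLinearForest H ∧ numPaths H = pathCoverNumber T := by
    simpa [pathCoverNumber] using Nat.sInf_mem (hSne T)
  obtain ⟨H', hH'T, hH'LF, hH'num, hH'e⟩ :
      ∃ H', H' ≤ T ∧ IsLinearForest H' ∧ numPaths H' = numPaths H ∧ s(v, u) ∉ H'.edgeSet := by
    by_cases heH : s(v, u) ∈ H.edgeSet
    · have hvH : H.Adj v u := (mem_edgeSet _).mp heH
      have hchoose : ¬ H.Adj v b₁ ∨ ¬ H.Adj v b₂ := by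
        by_contra hcon
        push_neg at hcon
        have h3 : 3 ≤ ndeg H v :=
          three_le_ncard (S := H.neighborSet v) hvH hcon.1 hcon.2 hub₁ hub₂ hb₁b₂
        have h2 := hHLF.2 v
        omega
      rcases hchoose with hbH | hbH
      · exact swap_edge hT hHT hHLF hvuT h₁.2.1 (Ne.symm hub₁)
          (h₁.1.2.2.1 b₁ p₁.end_mem_support) hvH hbH
      · exact swap_edge hT hHT hHLF hvuT h₂.2.1 (Ne.symm hub₂)
          (h₂.1.2.2.1 b₂ p₂.end_mem_support) hvH hbH
    · exact ⟨H, hHT, hHLF, rfl, heH⟩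
  have hH'del : H' ≤ T.deleteEdges {s(v, u)} := by
    intro a b hab
    rw [deleteEdges_adj]
    refine ⟨hH'T hab, fun hcon => hH'e ?_⟩
    rw [Set.mem_singleton_iff] at hcon
    rw [← hcon]
    exact (mem_edgeSet _).mpr hab
  have hle1 : pathCoverNumber (T.deleteEdges {s(v, u)}) ≤ numPaths H' :=
    Nat.sInf_le ⟨H', hH'del, hH'LF, rfl⟩
  have hle2 : pathCoverNumber T ≤ pathCoverNumber (T.deleteEdges {s(v, u)}) := by
    obtain ⟨H₃, hH₃le, hH₃LF, hH₃num⟩ := Nat.sInf_mem (hSne (T.deleteEdges {s(v, u)}))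
    exact Nat.sInf_le ⟨H₃, hH₃le.trans (deleteEdges_le _), hH₃LF, hH₃num⟩
  refine ⟨⟨H', ⟨hH'T, hH'LF, by omega⟩, hH'e⟩, by omega⟩

end PaperPC
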